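/- arXiv:2111.14769 — 2 statements merged into one kernel-verified Lean document; each statement's English description precedes it below -/
import Mathlib

section
/- For any p ∈ ℂ with |p| = 1 and any z ∈ ℂ with z ≠ p, the outer normal derivative of x ↦ log|x - p| at a point z of the unit circle equals 1/2; that is, the radial derivative ∂_r log|re^{iθ} - p| evaluated at r = 1 equals 1/2 whenever e^{iθ} ≠ p. -/
open Complex

/-- For `p` on the unit circle and `z ≠ p` on the unit circle, the outer normal
(radial) derivative of `x ↦ log |x - p|` at `z`, i.e. the derivative of
`r ↦ log |r z - p|` at `r = 1`, equals `1/2`. -/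
theorem radial_deriv_log_dist (p z : ℂ) (hp : ‖p‖ = 1)
    (hz : ‖z‖ = 1) (hzp : z ≠ p) :
    HasDerivAt (fun r : ℝ => Real.log ‖(r : ℂ) * z - p‖) (1 / 2) 1 := by
  have hz2 : z.re ^ 2 + z.im ^ 2 = 1 := by
    have h := Complex.sq_norm z
    rw [hz] at h
    simpa [Complex.normSq_apply, sq] using h.symm
  have hp2 : p.re ^ 2 + p.im ^ 2 = 1 := by
    have h := Complex.sq_norm p
    rw [hp] at h
    simpa [Complex.normSq_apply, sq] using h.symm
  set c : ℝ := Complex.normSq (z - p) with hc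
  have hc0 : c ≠ 0 := by
    simp only [hc, ne_eq, Complex.normSq_eq_zero, sub_eq_zero]
    exact hzp
  -- derivative of r ↦ normSq (r z - p) at 1 is c
  have hg : HasDerivAt (fun r : ℝ => Complex.normSq ((r : ℂ) * z - p)) c 1 := by
    have heq : (fun r : ℝ => Complex.normSq ((r : ℂ) * z - p))
        = fun r : ℝ => (r * z.re - p.re) ^ 2 + (r * z.im - p.im) ^ 2 := by
      funext r
      simp [Complex.normSq_apply, sq]
    rw [heq]
    have h1 : HasDerivAt (fun r : ℝ => (r * z.re - p.re) ^ 2 + (r * z.im - p.im) ^ 2)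
        (2 * (1 * z.re - p.re) ^ 1 * z.re + 2 * (1 * z.im - p.im) ^ 1 * z.im) 1 := by
      refine HasDerivAt.congr_deriv ((((hasDerivAt_id 1).mul_const z.re).sub_const p.re |>.pow 2).add
        (((hasDerivAt_id 1).mul_const z.im).sub_const p.im |>.pow 2)) ?_
      simp
    convert h1 using 1
    simp only [hc, Complex.normSq_apply, Complex.sub_re, Complex.sub_im]
    nlinarith [hz2, hp2]
  have h1z : ((1 : ℝ) : ℂ) * z - p = z - p := by push_cast; ring
  have hgne : Complex.normSq ((1 : ℝ) * z - p) ≠ 0 := by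
    rw [h1z]; exact hc0
  have hlog : HasDerivAt (fun r : ℝ => Real.log (Complex.normSq ((r : ℂ) * z - p)))
      (c / Complex.normSq ((1 : ℝ) * z - p)) 1 := hg.log hgne
  have hcc : c / Complex.normSq ((1 : ℝ) * z - p) = 1 := by
    rw [h1z]; exact div_self hc0
  rw [hcc] at hlog
  have heq2 : (fun r : ℝ => Real.log ‖(r : ℂ) * z - p‖)
      = fun r : ℝ => Real.log (Complex.normSq ((r : ℂ) * z - p)) / 2 := by
    funext r
    rw [Complex.norm_def, Real.log_sqrt (Complex.normSq_nonneg _)]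
  rw [heq2]
  exact hlog.div_const 2
end

section
/- Let (φ_n) be a sequence in the fractional Sobolev space H^{1/2}(∂D²) converging to φ in H^{1/2}(∂D²), and let F : ℝ → ℝ^m be Lipschitz continuous. Then F∘φ_n → F∘φ in H^{1/2}(∂D², ℝ^m). -/
open Complex MeasureTheory Filter Topology ENNReal

/-- The Gagliardo `H^{1/2}` seminorm (squared) of a map on the unit circle,
parametrized by arc length `θ ↦ e^{iθ}`. -/
noncomputable def gagliardo {E : Type*} [NormedAddCommGroup E] (u : ℝ → E) : ℝ≥0∞ :=
  ∫⁻ θ in Set.Ioc (0 : ℝ) (2 * Real.pi), ∫⁻ η in Set.Ioc (0 : ℝ) (2 * Real.pi),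
    ENNReal.ofReal (‖u θ - u η‖ ^ 2 /
      ‖Complex.exp (θ * Complex.I) - Complex.exp (η * Complex.I)‖ ^ 2)

/-- The squared `L²` norm on the unit circle. -/
noncomputable def circleL2 {E : Type*} [NormedAddCommGroup E] (u : ℝ → E) : ℝ≥0∞ :=
  ∫⁻ θ in Set.Ioc (0 : ℝ) (2 * Real.pi), ENNReal.ofReal (‖u θ‖ ^ 2)

noncomputable def muc : Measure ℝ := volume.restrict (Set.Ioc (0 : ℝ) (2 * Real.pi))

instance : SigmaFinite muc := by
  show SigmaFinite (volume.restrict _); infer_instance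

/-- The Gagliardo kernel. -/
noncomputable def gker {E : Type*} [NormedAddCommGroup E] (u : ℝ → E) (p : ℝ × ℝ) : ℝ≥0∞ :=
  ENNReal.ofReal (‖u p.1 - u p.2‖ ^ 2 /
      ‖Complex.exp (p.1 * Complex.I) - Complex.exp (p.2 * Complex.I)‖ ^ 2)

lemma gker_meas {E : Type*} [NormedAddCommGroup E] [MeasurableSpace E] [BorelSpace E]
    [SecondCountableTopology E] {u : ℝ → E} (hu : Measurable u) : Measurable (gker u) := by
  apply ENNReal.measurable_ofReal.comp
  apply Measurable.div
  · exact (((hu.comp measurable_fst).sub (hu.comp measurable_snd)).norm).pow_const 2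
  · exact (continuous_norm.measurable.comp (by fun_prop)).pow_const 2

lemma gagliardo_eq {E : Type*} [NormedAddCommGroup E] [MeasurableSpace E] [BorelSpace E]
    [SecondCountableTopology E] {u : ℝ → E} (hu : Measurable u) :
    gagliardo u = ∫⁻ p, gker u p ∂(muc.prod muc) :=
  (MeasureTheory.lintegral_prod _ (gker_meas hu).aemeasurable).symm

lemma circleL2_eq {E : Type*} [NormedAddCommGroup E] (u : ℝ → E) :
    circleL2 u = ∫⁻ θ, ENNReal.ofReal (‖u θ‖ ^ 2) ∂muc := rfl

lemma key_ineq {m : ℕ} {K : NNReal} {F : ℝ → EuclideanSpace ℝ (Fin m)}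
    (hF : LipschitzWith K F) (a b c d : ℝ) :
    ‖(F a - F b) - (F c - F d)‖ ^ 2
      ≤ 2 * (K : ℝ) ^ 2 * ((a - b) - (c - d)) ^ 2 + 8 * (K : ℝ) ^ 2 * (b - d) ^ 2 := by
  have e : (F a - F b) - (F c - F d) = (F a - F c) - (F b - F d) := by abel
  have h1 : ‖(F a - F b) - (F c - F d)‖ ≤ (K : ℝ) * |a - c| + (K : ℝ) * |b - d| := by
    rw [e]
    refine (norm_sub_le _ _).trans (add_le_add ?_ ?_)
    · simpa [dist_eq_norm, Real.dist_eq] using hF.dist_le_mul a c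
    · simpa [dist_eq_norm, Real.dist_eq] using hF.dist_le_mul b d
  have h2 : |a - c| ≤ |(a - b) - (c - d)| + |b - d| := by
    have : a - c = ((a - b) - (c - d)) + (b - d) := by ring
    rw [this]; exact abs_add_le _ _
  have h3 : ‖(F a - F b) - (F c - F d)‖ ≤ (K : ℝ) * (|(a - b) - (c - d)| + 2 * |b - d|) := by
    nlinarith [NNReal.coe_nonneg K, abs_nonneg (b - d)]
  have hn := norm_nonneg ((F a - F b) - (F c - F d))
  nlinarith [_root_.sq_abs ((a - b) - (c - d)), _root_.sq_abs (b - d),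
    abs_nonneg ((a-b)-(c-d)), abs_nonneg (b-d),
    sq_nonneg (|(a-b)-(c-d)| - 2*|b-d|),
    sq_nonneg ((K:ℝ) * (|(a-b)-(c-d)| + 2*|b-d|)), NNReal.coe_nonneg K,
    mul_nonneg (NNReal.coe_nonneg K)
      (add_nonneg (abs_nonneg ((a-b)-(c-d))) (by positivity : (0:ℝ) ≤ 2*|b-d|))]

lemma ae_prod_of_ae {α : Type*} [MeasurableSpace α] (μ : Measure α) [SFinite μ]
    {P : α → Prop} (h : ∀ᵐ x ∂μ, P x) : ∀ᵐ p ∂μ.prod μ, P p.1 ∧ P p.2 := by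
  rw [ae_iff] at h ⊢
  set N := {x | ¬ P x}
  have hsub : {p : α × α | ¬ (P p.1 ∧ P p.2)} ⊆ (N ×ˢ Set.univ) ∪ (Set.univ ×ˢ N) := by
    intro p hp
    rw [Set.mem_setOf_eq, not_and_or] at hp
    rcases hp with hp | hp
    · exact Or.inl ⟨hp, trivial⟩
    · exact Or.inr ⟨trivial, hp⟩
  refine measure_mono_null hsub (measure_union_null ?_ ?_)
  · rw [Measure.prod_prod, h, zero_mul]
  · rw [Measure.prod_prod, h, mul_zero]

/-- If `φₙ → φ` in `H^{1/2}(∂D²)` and `F : ℝ → ℝᵐ` is Lipschitz, then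
`F∘φₙ → F∘φ` in `H^{1/2}(∂D², ℝᵐ)`. -/
theorem lipschitz_comp_H_half_convergence (m : ℕ) (K : NNReal)
    (F : ℝ → EuclideanSpace ℝ (Fin m)) (hF : LipschitzWith K F)
    (φ : ℝ → ℝ) (φn : ℕ → ℝ → ℝ) (hφm : Measurable φ) (hφnm : ∀ n, Measurable (φn n))
    (hφH : gagliardo φ ≠ ⊤) (hφL2 : circleL2 φ ≠ ⊤)
    (hφnH : ∀ n, gagliardo (φn n) ≠ ⊤)
    (hconv : Tendsto
      (fun n => gagliardo (fun θ => φn n θ - φ θ) + circleL2 (fun θ => φn n θ - φ θ))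
      atTop (𝓝 0)) :
    Tendsto
      (fun n => gagliardo (fun θ => F (φn n θ) - F (φ θ)) +
        circleL2 (fun θ => F (φn n θ) - F (φ θ)))
      atTop (𝓝 0) := by
  have hgm : ∀ n, Measurable (fun θ => F (φn n θ) - F (φ θ)) := fun n =>
    (hF.continuous.measurable.comp (hφnm n)).sub (hF.continuous.measurable.comp hφm)
  have hψm : ∀ n, Measurable (fun θ => φn n θ - φ θ) := fun n => (hφnm n).sub hφm
  have hGψ : Tendsto (fun n => gagliardo (fun θ => φn n θ - φ θ)) atTop (𝓝 0) :=
    tendsto_of_tendsto_of_tendsto_of_le_of_le tendsto_const_nhds hconv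
      (fun n => zero_le) (fun n => le_self_add)
  have hLψ : Tendsto (fun n => circleL2 (fun θ => φn n θ - φ θ)) atTop (𝓝 0) :=
    tendsto_of_tendsto_of_tendsto_of_le_of_le tendsto_const_nhds hconv
      (fun n => zero_le) (fun n => le_add_self)
  -- the L² part
  have hL2le : ∀ n, circleL2 (fun θ => F (φn n θ) - F (φ θ)) ≤
      ENNReal.ofReal ((K:ℝ)^2) * circleL2 (fun θ => φn n θ - φ θ) := by
    intro n
    rw [circleL2_eq, circleL2_eq, ← lintegral_const_mul' _ _ ENNReal.ofReal_ne_top]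
    refine lintegral_mono fun θ => ?_
    rw [← ENNReal.ofReal_mul (by positivity)]
    refine ENNReal.ofReal_le_ofReal ?_
    have h1 : ‖F (φn n θ) - F (φ θ)‖ ≤ (K:ℝ) * ‖φn n θ - φ θ‖ := by
      simpa [dist_eq_norm] using hF.dist_le_mul (φn n θ) (φ θ)
    nlinarith [norm_nonneg (F (φn n θ) - F (φ θ)), norm_nonneg (φn n θ - φ θ),
      NNReal.coe_nonneg K, mul_nonneg (NNReal.coe_nonneg K) (norm_nonneg (φn n θ - φ θ))]
  have hL2 : Tendsto (fun n => circleL2 (fun θ => F (φn n θ) - F (φ θ))) atTop (𝓝 0) := by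
    have hup : Tendsto (fun n => ENNReal.ofReal ((K:ℝ)^2) *
        circleL2 (fun θ => φn n θ - φ θ)) atTop (𝓝 0) := by
      simpa only [mul_zero] using ENNReal.Tendsto.const_mul (a := ENNReal.ofReal ((K:ℝ)^2)) hLψ (Or.inr ENNReal.ofReal_ne_top)
    exact tendsto_of_tendsto_of_tendsto_of_le_of_le tendsto_const_nhds hup
      (fun n => zero_le) hL2le
  -- the Gagliardo part
  have hG : Tendsto (fun n => gagliardo (fun θ => F (φn n θ) - F (φ θ))) atTop (𝓝 0) := by
    apply tendsto_of_subseq_tendsto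
    intro ns hns
    have hc : Tendsto (fun j => gagliardo (fun θ => φn (ns j) θ - φ θ) +
        circleL2 (fun θ => φn (ns j) θ - φ θ)) atTop (𝓝 0) := hconv.comp hns
    have hev : ∀ k : ℕ, ∀ᶠ j in atTop,
        gagliardo (fun θ => φn (ns j) θ - φ θ) ≤ (2:ℝ≥0∞)⁻¹ ^ k ∧
        circleL2 (fun θ => φn (ns j) θ - φ θ) ≤ (2:ℝ≥0∞)⁻¹ ^ k := by
      intro k
      have hpos : (0:ℝ≥0∞) < (2:ℝ≥0∞)⁻¹ ^ k :=
        ENNReal.pow_pos (ENNReal.inv_pos.2 ENNReal.ofNat_ne_top) k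
      filter_upwards [ENNReal.tendsto_nhds_zero.mp hc _ hpos] with j hj
      exact ⟨le_trans le_self_add hj, le_trans le_add_self hj⟩
    obtain ⟨ms, hmsmono, hms⟩ := Filter.extraction_forall_of_eventually hev
    refine ⟨ms, ?_⟩
    set q : ℕ → ℕ := fun k => ns (ms k) with hq
    have htsum_geo : (∑' k : ℕ, ((2:ℝ≥0∞)⁻¹) ^ k) ≠ ⊤ := by
      rw [ENNReal.tsum_geometric, ENNReal.one_sub_inv_two]
      simp
    -- a.e. convergence on the line
    have hmL : ∀ k : ℕ, Measurable (fun θ => ENNReal.ofReal (‖φn (q k) θ - φ θ‖ ^ 2)) := by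
      intro k
      exact ENNReal.measurable_ofReal.comp (((hψm (q k)).norm).pow_const 2)
    have hsum1 : ∫⁻ θ, (∑' k, ENNReal.ofReal (‖φn (q k) θ - φ θ‖ ^ 2)) ∂muc ≠ ⊤ := by
      rw [lintegral_tsum (fun k => (hmL k).aemeasurable)]
      refine ne_top_of_le_ne_top htsum_geo (ENNReal.tsum_le_tsum fun k => ?_)
      exact (hms k).2
    have haeL : ∀ᵐ θ ∂muc, Tendsto (fun k => φn (q k) θ - φ θ) atTop (𝓝 0) := by
      filter_upwards [ae_lt_top (Measurable.ennreal_tsum hmL) hsum1] with θ hθ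
      have h0 : Tendsto (fun k => ENNReal.ofReal (‖φn (q k) θ - φ θ‖ ^ 2)) atTop (𝓝 0) :=
        ENNReal.tendsto_atTop_zero_of_tsum_ne_top hθ.ne
      have h1 : Tendsto (fun k => ‖φn (q k) θ - φ θ‖ ^ 2) atTop (𝓝 0) := by
        have h := (ENNReal.tendsto_toReal (by simp : (0:ℝ≥0∞) ≠ ⊤)).comp h0
        simp only [ENNReal.toReal_zero] at h
        exact h.congr fun k => ENNReal.toReal_ofReal (by positivity)
      have h2 : Tendsto (fun k => ‖φn (q k) θ - φ θ‖) atTop (𝓝 0) := by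
        have h := (Real.continuous_sqrt.tendsto 0).comp h1
        simp only [Real.sqrt_zero] at h
        exact h.congr fun k => Real.sqrt_sq (norm_nonneg _)
      exact tendsto_zero_iff_norm_tendsto_zero.mpr h2
    -- dominating function on the product
    have hsum2 : ∫⁻ p, (∑' k, gker (fun θ => φn (q k) θ - φ θ) p) ∂(muc.prod muc) ≠ ⊤ := by
      rw [lintegral_tsum (fun k => (gker_meas (hψm (q k))).aemeasurable)]
      refine ne_top_of_le_ne_top htsum_geo (ENNReal.tsum_le_tsum fun k => ?_)
      rw [← gagliardo_eq (hψm (q k))]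
      exact (hms k).1
    set T : ℝ × ℝ → ℝ≥0∞ := fun p => ∑' k, gker (fun θ => φn (q k) θ - φ θ) p with hT
    have hTmeas : Measurable T := Measurable.ennreal_tsum fun k => gker_meas (hψm (q k))
    set C1 : ℝ≥0∞ := ENNReal.ofReal (2*(K:ℝ)^2) with hC1
    set C2 : ℝ≥0∞ := ENNReal.ofReal (8*(K:ℝ)^2) with hC2
    set B : ℝ × ℝ → ℝ≥0∞ := fun p => C1 * T p + C2 * gker φ p with hB
    have hBfin : ∫⁻ p, B p ∂(muc.prod muc) ≠ ⊤ := by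
      rw [hB]
      rw [lintegral_add_left (hTmeas.const_mul _),
        lintegral_const_mul' _ _ ENNReal.ofReal_ne_top,
        lintegral_const_mul' _ _ ENNReal.ofReal_ne_top]
      exact ENNReal.add_ne_top.2 ⟨ENNReal.mul_ne_top ENNReal.ofReal_ne_top hsum2,
        ENNReal.mul_ne_top ENNReal.ofReal_ne_top (by rw [← gagliardo_eq hφm]; exact hφH)⟩
    -- pointwise bound
    have hbound : ∀ k p, gker (fun θ => F (φn (q k) θ) - F (φ θ)) p ≤ B p := by
      intro k p
      set D : ℝ := ‖Complex.exp (p.1 * Complex.I) - Complex.exp (p.2 * Complex.I)‖ ^ 2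
        with hD
      have hDnn : (0:ℝ) ≤ D := sq_nonneg _
      have hnum := key_ineq hF (φn (q k) p.1) (φ p.1) (φn (q k) p.2) (φ p.2)
      have hdiv : ‖(F (φn (q k) p.1) - F (φ p.1)) - (F (φn (q k) p.2) - F (φ p.2))‖ ^ 2 / D ≤
          (2*(K:ℝ)^2 * ((φn (q k) p.1 - φ p.1) - (φn (q k) p.2 - φ p.2)) ^ 2
            + 8*(K:ℝ)^2 * (φ p.1 - φ p.2) ^ 2) / D := by
        rcases eq_or_lt_of_le hDnn with h | h
        · rw [← h]; simp
        · exact (div_le_div_iff_of_pos_right h).2 hnum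
      calc gker (fun θ => F (φn (q k) θ) - F (φ θ)) p
          = ENNReal.ofReal (‖(F (φn (q k) p.1) - F (φ p.1)) -
              (F (φn (q k) p.2) - F (φ p.2))‖ ^ 2 / D) := rfl
        _ ≤ ENNReal.ofReal ((2*(K:ℝ)^2 * ((φn (q k) p.1 - φ p.1) - (φn (q k) p.2 - φ p.2)) ^ 2
              + 8*(K:ℝ)^2 * (φ p.1 - φ p.2) ^ 2) / D) := ENNReal.ofReal_le_ofReal hdiv
        _ = C1 * ENNReal.ofReal (((φn (q k) p.1 - φ p.1) - (φn (q k) p.2 - φ p.2)) ^ 2 / D)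
              + C2 * ENNReal.ofReal ((φ p.1 - φ p.2) ^ 2 / D) := by
            rw [hC1, hC2, ← ENNReal.ofReal_mul (by positivity : (0:ℝ) ≤ 2*(K:ℝ)^2),
              ← ENNReal.ofReal_mul (by positivity : (0:ℝ) ≤ 8*(K:ℝ)^2),
              ← ENNReal.ofReal_add (by positivity) (by positivity)]
            congr 1
            ring
        _ = C1 * gker (fun θ => φn (q k) θ - φ θ) p + C2 * gker φ p := by
            simp only [gker, Real.norm_eq_abs, _root_.sq_abs, hD]
        _ ≤ C1 * T p + C2 * gker φ p := by
            gcongr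
            exact ENNReal.le_tsum k
    -- a.e. convergence of the kernels
    have hlim : ∀ᵐ p ∂(muc.prod muc),
        Tendsto (fun k => gker (fun θ => F (φn (q k) θ) - F (φ θ)) p) atTop (𝓝 0) := by
      filter_upwards [ae_prod_of_ae muc haeL] with p hp
      obtain ⟨h1, h2⟩ := hp
      have hnormle : ∀ k, ‖(F (φn (q k) p.1) - F (φ p.1)) - (F (φn (q k) p.2) - F (φ p.2))‖
          ≤ (K:ℝ) * ‖φn (q k) p.1 - φ p.1‖ + (K:ℝ) * ‖φn (q k) p.2 - φ p.2‖ := by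
        intro k
        refine (norm_sub_le _ _).trans (add_le_add ?_ ?_)
        · simpa [dist_eq_norm] using hF.dist_le_mul (φn (q k) p.1) (φ p.1)
        · simpa [dist_eq_norm] using hF.dist_le_mul (φn (q k) p.2) (φ p.2)
      have hup : Tendsto (fun k => (K:ℝ) * ‖φn (q k) p.1 - φ p.1‖ +
          (K:ℝ) * ‖φn (q k) p.2 - φ p.2‖) atTop (𝓝 0) := by
        have := ((h1.norm.const_mul (K:ℝ)).add (h2.norm.const_mul (K:ℝ)))
        simpa using this
      have hto : Tendsto (fun k => ‖(F (φn (q k) p.1) - F (φ p.1)) -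
          (F (φn (q k) p.2) - F (φ p.2))‖) atTop (𝓝 0) :=
        tendsto_of_tendsto_of_tendsto_of_le_of_le tendsto_const_nhds hup
          (fun k => norm_nonneg _) hnormle
      have hto2 : Tendsto (fun k => ‖(F (φn (q k) p.1) - F (φ p.1)) -
          (F (φn (q k) p.2) - F (φ p.2))‖ ^ 2 /
          ‖Complex.exp (p.1 * Complex.I) - Complex.exp (p.2 * Complex.I)‖ ^ 2)
          atTop (𝓝 0) := by
        have := (hto.pow 2).div_const
          (‖Complex.exp (p.1 * Complex.I) - Complex.exp (p.2 * Complex.I)‖ ^ 2)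
        simpa using this
      have := (ENNReal.continuous_ofReal.tendsto 0).comp hto2
      simpa [Function.comp_def, gker] using this
    -- dominated convergence
    have hDCT := tendsto_lintegral_of_dominated_convergence (μ := muc.prod muc)
      (F := fun k => gker (fun θ => F (φn (q k) θ) - F (φ θ))) (f := fun _ => 0) B
      (fun k => gker_meas (hgm (q k))) (fun k => Filter.Eventually.of_forall (hbound k))
      hBfin hlim
    rw [lintegral_zero] at hDCT
    have heq : (fun k => ∫⁻ p, gker (fun θ => F (φn (q k) θ) - F (φ θ)) p ∂(muc.prod muc))
        = fun k => gagliardo (fun θ => F (φn (q k) θ) - F (φ θ)) :=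
      funext fun k => (gagliardo_eq (hgm (q k))).symm
    rw [heq] at hDCT
    exact hDCT
  simpa using hG.add hL2
end
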